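/- Let G be a finite simple graph that is C₅-free (contains no cycle on 5 vertices as a subgraph). Then 4·ω₂'(G) ≤ σ(G)², where σ(G) is the Ore-degree of G. -/

import Mathlib

open SimpleGraph

/-- `G.ContainsSub H` means `G` contains a copy of `H` as a (not necessarily induced)
subgraph, i.e. there is an injective graph homomorphism from `H` to `G`. -/
def SimpleGraph.ContainsSub {V W : Type*} (G : SimpleGraph V) (H : SimpleGraph W) : Prop :=
  ∃ f : W → V, Function.Injective f ∧ ∀ a b, H.Adj a b → G.Adj (f a) (f b)

/-- A strong clique of `G`: a set of edges of `G` any two distinct members of which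
either share an endpoint or have endpoints joined by an edge of `G`. -/
def SimpleGraph.IsStrongClique {V : Type*} (G : SimpleGraph V) (F : Finset (Sym2 V)) : Prop :=
  (F : Set (Sym2 V)) ⊆ G.edgeSet ∧
    ∀ e ∈ F, ∀ f ∈ F, e ≠ f → ∃ x ∈ e, ∃ y ∈ f, x = y ∨ G.Adj x y

/-- The strong clique number `ω₂'(G)`: the largest cardinality of a strong clique. -/
noncomputable def SimpleGraph.strongCliqueNumber {V : Type*} (G : SimpleGraph V) : ℕ :=
  sSup {n | ∃ F : Finset (Sym2 V), G.IsStrongClique F ∧ F.card = n}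

/-- The Ore-degree `σ(G)` of `G`: the maximum over edges `xy` of `deg x + deg y`
(`0` if `G` has no edges). -/
def SimpleGraph.oreDegree {V : Type*} [Fintype V] [DecidableEq V] (G : SimpleGraph V)
    [DecidableRel G.Adj] : ℕ :=
  G.edgeFinset.sup fun e =>
    Sym2.lift ⟨fun x y => G.degree x + G.degree y, fun _ _ => Nat.add_comm _ _⟩ e

open Finset in
private lemma contains_c5_of {V : Type*} (G : SimpleGraph V) (v0 v1 v2 v3 v4 : V)
    (h01 : G.Adj v0 v1) (h12 : G.Adj v1 v2) (h23 : G.Adj v2 v3) (h34 : G.Adj v3 v4)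
    (h40 : G.Adj v4 v0)
    (n02 : v0 ≠ v2) (n03 : v0 ≠ v3) (n13 : v1 ≠ v3) (n14 : v1 ≠ v4) (n24 : v2 ≠ v4) :
    (∃ f : Fin 5 → V, Function.Injective f ∧
      ∀ a b, (cycleGraph 5).Adj a b → G.Adj (f a) (f b)) := by
  refine ⟨![v0, v1, v2, v3, v4], ?_, ?_⟩
  · have n01 := h01.ne
    have n12 := h12.ne
    have n23 := h23.ne
    have n34 := h34.ne
    have n40 := h40.ne
    intro a b hab
    fin_cases a <;> fin_cases b <;> simp_all
  · intro a b hab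
    fin_cases a <;> fin_cases b <;>
      simp only [Matrix.cons_val_zero, Matrix.cons_val_one, Matrix.head_cons,
        Matrix.cons_val_two, Matrix.tail_cons, Matrix.cons_val_three, Matrix.cons_val_four] <;>
      first
        | exact h01 | exact h12 | exact h23 | exact h34 | exact h40
        | exact h01.symm | exact h12.symm | exact h23.symm | exact h34.symm | exact h40.symm
        | exact absurd hab (by decide)


open Finset in
private lemma strong_clique_card_bound {V : Type*} [Fintype V] [DecidableEq V]
    (G : SimpleGraph V) [DecidableRel G.Adj]
    (hfree : ¬ G.ContainsSub (cycleGraph 5))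
    (F : Finset (Sym2 V)) (hF : G.IsStrongClique F) :
    4 * F.card ≤ G.oreDegree ^ 2 := by
  obtain ⟨hFE, hFS⟩ := hF
  have hfree' : ¬ ∃ f : Fin 5 → V, Function.Injective f ∧
      ∀ a b, (cycleGraph 5).Adj a b → G.Adj (f a) (f b) := hfree
  clear hfree
  classical
  rcases F.eq_empty_or_nonempty with rfl | hFne
  · simp
  obtain ⟨e0, he0⟩ := hFne
  haveI : Nonempty V := ⟨e0.out.1⟩
  set σ := G.oreDegree with hσ
  set AT : V → Finset (Sym2 V) := fun w => F.filter (fun e => w ∈ e) with hAT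
  have hATmem : ∀ w e, e ∈ AT w ↔ e ∈ F ∧ w ∈ e := by intro w e; simp [hAT]
  -- the "other endpoint" map
  set oth : V → Sym2 V → V := fun w e => if h : w ∈ e then Sym2.Mem.other' h else w with hoth
  have hothspec : ∀ w e, w ∈ e → s(w, oth w e) = e := by
    intro w e h
    simp only [hoth, dif_pos h]
    exact Sym2.other_spec' h
  have hothadj : ∀ w e, e ∈ F → w ∈ e → G.Adj w (oth w e) := by
    intro w e he h
    rw [← SimpleGraph.mem_edgeSet, hothspec w e h]
    exact hFE he
  have hATcard : ∀ w, (AT w).card ≤ G.degree w := by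
    intro w
    rw [← card_neighborFinset_eq_degree]
    apply Finset.card_le_card_of_injOn (oth w)
    · intro e he
      rw [Finset.mem_coe, hATmem] at he
      rw [Finset.mem_coe, mem_neighborFinset]
      exact hothadj w e he.1 he.2
    · intro e he e' he' hee
      rw [Finset.mem_coe, hATmem] at he he'
      rw [← hothspec w e he.2, ← hothspec w e' he'.2, hee]
  -- choose x maximizing |AT x|
  obtain ⟨x, -, hxmax⟩ := Finset.exists_max_image Finset.univ (fun w => (AT w).card)
    ⟨Classical.arbitrary V, Finset.mem_univ _⟩
  set Yx : Finset V := (G.neighborFinset x).filter (fun y => s(x, y) ∈ F) with hYx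
  have hYadj : ∀ y ∈ Yx, G.Adj x y := by
    intro y hy
    have := (mem_filter.mp hy).1
    rwa [mem_neighborFinset] at this
  have hYmemF : ∀ y ∈ Yx, s(x, y) ∈ F := fun y hy => (mem_filter.mp hy).2
  have hYcard : Yx.card = (AT x).card := by
    apply Finset.card_bij (fun y _ => s(x, y))
    · intro y hy
      rw [hATmem]
      exact ⟨hYmemF y hy, by simp⟩
    · intro y hy y' hy' h
      exact Sym2.congr_right.mp h
    · intro e he
      rw [hATmem] at he
      refine ⟨oth x e, ?_, hothspec x e he.2⟩
      rw [hYx, mem_filter, mem_neighborFinset]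
      constructor
      · exact hothadj x e he.1 he.2
      · rw [hothspec x e he.2]; exact he.1
  set Efar : Finset (Sym2 V) := F.filter (fun g => ∀ w ∈ g, ¬(w = x ∨ G.Adj x w)) with hEfar
  -- C5-free: each far edge has an endpoint adjacent to all of Yx
  have hattach : ∀ g ∈ Efar, ∃ z ∈ g, ∀ y ∈ Yx, G.Adj z y := by
    intro g hg
    rw [hEfar, mem_filter] at hg
    obtain ⟨hgF, hgfar⟩ := hg
    have hz0 : g.out.1 ∈ g := Sym2.out_fst_mem g
    set z := g.out.1 with hz
    set t := oth z g with htdef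
    have hzt : s(z, t) = g := hothspec z g hz0
    have htg : t ∈ g := by rw [← hzt]; simp
    have hAdjzt : G.Adj z t := hothadj z g hgF hz0
    have hint : ∀ y ∈ Yx, G.Adj z y ∨ G.Adj t y := by
      intro y hy
      have hxy := hYadj y hy
      have hne : g ≠ s(x, y) := by
        intro h
        exact (hgfar x (by rw [h]; simp)) (Or.inl rfl)
      obtain ⟨p, hp, q, hq, hpq⟩ := hFS g hgF _ (hYmemF y hy) hne
      have hpfar := hgfar p hp
      push_neg at hpfar
      rw [Sym2.mem_iff] at hq
      have hpy : G.Adj p y := by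
        rcases hq with rfl | rfl
        · rcases hpq with h | h
          · exact absurd h hpfar.1
          · exact absurd h.symm hpfar.2
        · rcases hpq with h | h
          · rw [h] at hpfar; exact absurd hxy hpfar.2
          · exact h
      have hpzt : p = z ∨ p = t := by
        rw [← hzt, Sym2.mem_iff] at hp; exact hp
      rcases hpzt with rfl | rfl
      · exact Or.inl hpy
      · exact Or.inr hpy
    by_cases hza : ∀ y ∈ Yx, G.Adj z y
    · exact ⟨z, hz0, hza⟩
    by_cases hta : ∀ y ∈ Yx, G.Adj t y
    · exact ⟨t, htg, hta⟩
    exfalso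
    push_neg at hza hta
    obtain ⟨yi, hyi, hzyi⟩ := hza
    obtain ⟨yj, hyj, htyj⟩ := hta
    have hAzyj : G.Adj z yj := (hint yj hyj).resolve_right htyj
    have hAtyi : G.Adj t yi := (hint yi hyi).resolve_left hzyi
    have hfz := hgfar z hz0
    have hft := hgfar t htg
    push_neg at hfz hft
    apply hfree'
    refine contains_c5_of G x yj z t yi (hYadj yj hyj) hAzyj.symm hAdjzt hAtyi ((hYadj yi hyi)).symm
      ?_ ?_ ?_ ?_ ?_
    · exact fun h => hfz.1 h.symm
    · exact fun h => hft.1 h.symm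
    · intro h; rw [h] at hyj; exact hft.2 (hYadj t hyj)
    · intro h; rw [h] at hAzyj; exact hzyi hAzyj
    · intro h; rw [← h] at hyi; exact hfz.2 (hYadj z hyi)
  -- attachment function
  set att : Sym2 V → V := fun g => if h : ∃ z ∈ g, ∀ y ∈ Yx, G.Adj z y then h.choose else x
    with hatt
  have hattg : ∀ g ∈ Efar, att g ∈ g ∧ ∀ y ∈ Yx, G.Adj (att g) y := by
    intro g hg
    have h := hattach g hg
    simp only [hatt, dif_pos h]
    exact ⟨h.choose_spec.1, h.choose_spec.2⟩
  set Zatt : Finset V := Efar.image att with hZatt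
  have hZprop : ∀ z ∈ Zatt, (¬(z = x ∨ G.Adj x z)) ∧ ∀ y ∈ Yx, G.Adj z y := by
    intro z hz
    rw [hZatt, mem_image] at hz
    obtain ⟨g, hg, rfl⟩ := hz
    have h1 := hattg g hg
    have h2 := (mem_filter.mp hg).2
    exact ⟨h2 (att g) h1.1, h1.2⟩
  -- per-attachment bound
  have hGz : ∀ z ∈ Zatt,
      (Efar.filter (fun g => att g = z)).card ≤ (Yx.filter (fun y => s(y, z) ∉ F)).card := by
    intro z hz
    have hzx := (hZprop z hz).1
    push_neg at hzx
    set Gz := Efar.filter (fun g => att g = z) with hGzdef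
    set Rz := Yx.filter (fun y => s(y, z) ∈ F) with hRz
    set Iz : Finset (Sym2 V) := Rz.image (fun y => s(y, z)) with hIz
    have hIzcard : Iz.card = Rz.card := by
      apply Finset.card_image_of_injOn
      intro y hy y' hy' h
      rw [Sym2.eq_iff] at h
      rcases h with ⟨h1, -⟩ | ⟨h1, h2⟩
      · exact h1
      · rw [h1, ← h2]
    have hsub : Gz ∪ Iz ⊆ AT z := by
      intro g hg
      rw [hATmem]
      rcases mem_union.mp hg with hg | hg
      · rw [hGzdef, mem_filter] at hg
        obtain ⟨hg1, hg2⟩ := hg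
        refine ⟨(mem_filter.mp hg1).1, ?_⟩
        rw [← hg2]
        exact (hattg g hg1).1
      · rw [hIz, mem_image] at hg
        obtain ⟨y, hy, rfl⟩ := hg
        exact ⟨(mem_filter.mp hy).2, by simp⟩
    have hdisj : Disjoint Gz Iz := by
      rw [Finset.disjoint_left]
      intro g hg hg'
      rw [hIz, mem_image] at hg'
      obtain ⟨y, hy, rfl⟩ := hg'
      rw [hGzdef, mem_filter] at hg
      have hfar := (mem_filter.mp hg.1).2
      exact (hfar y (by simp)) (Or.inr (hYadj y (mem_filter.mp hy).1))
    have h1 : Gz.card + Rz.card ≤ (AT z).card := by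
      rw [← hIzcard, ← Finset.card_union_of_disjoint hdisj]
      exact Finset.card_le_card hsub
    have h2 : (AT z).card ≤ Yx.card := by
      rw [hYcard]; exact hxmax z (Finset.mem_univ z)
    have h3 : Rz.card + (Yx.filter (fun y => s(y, z) ∉ F)).card = Yx.card := by
      rw [hRz]
      exact Finset.card_filter_add_card_filter_not _
    omega
  -- summing over attachments
  have hfarsum : Efar.card ≤ ∑ y ∈ Yx, (Zatt.filter (fun z => s(y, z) ∉ F)).card := by
    have h1 : Efar.card = ∑ z ∈ Zatt, (Efar.filter (fun g => att g = z)).card :=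
      Finset.card_eq_sum_card_fiberwise (fun g hg => Finset.mem_image_of_mem att hg)
    have h2 : ∑ y ∈ Yx, (Zatt.filter (fun z => s(y, z) ∉ F)).card
        = ∑ z ∈ Zatt, (Yx.filter (fun y => s(y, z) ∉ F)).card := by
      simp_rw [Finset.card_filter]
      exact Finset.sum_comm
    rw [h1, h2]
    exact Finset.sum_le_sum hGz
  -- degree bound at y ∈ Yx
  have hBy : ∀ y ∈ Yx, (AT y).card + (Zatt.filter (fun z => s(y, z) ∉ F)).card ≤ G.degree y := by
    intro y hy
    set P : Finset V := (AT y).image (oth y) with hP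
    set Q : Finset V := Zatt.filter (fun z => s(y, z) ∉ F) with hQ
    have hPcard : P.card = (AT y).card := by
      apply Finset.card_image_of_injOn
      intro e he e' he' hee
      rw [Finset.mem_coe, hATmem] at he he'
      rw [← hothspec y e he.2, ← hothspec y e' he'.2, hee]
    have hPN : P ⊆ G.neighborFinset y := by
      intro p hp
      rw [hP, mem_image] at hp
      obtain ⟨e, he, rfl⟩ := hp
      rw [hATmem] at he
      rw [mem_neighborFinset]
      exact hothadj y e he.1 he.2
    have hQN : Q ⊆ G.neighborFinset y := by
      intro z hz
      rw [hQ, mem_filter] at hz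
      rw [mem_neighborFinset]
      exact ((hZprop z hz.1).2 y hy).symm
    have hdisj : Disjoint P Q := by
      rw [Finset.disjoint_left]
      intro p hp hq
      rw [hP, mem_image] at hp
      obtain ⟨e, he, rfl⟩ := hp
      rw [hATmem] at he
      rw [hQ, mem_filter] at hq
      apply hq.2
      rw [hothspec y e he.2]
      exact he.1
    calc (AT y).card + Q.card = (P ∪ Q).card := by
          rw [Finset.card_union_of_disjoint hdisj, hPcard]
      _ ≤ (G.neighborFinset y).card := Finset.card_le_card (Finset.union_subset hPN hQN)
      _ = G.degree y := card_neighborFinset_eq_degree _ _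
  -- nonfar edges
  have hnonfar : (F \ Efar).card ≤ ∑ w ∈ (G.neighborFinset x), (AT w).card := by
    have hsub : F \ Efar ⊆ (G.neighborFinset x).biUnion AT := by
      intro g hg
      rw [mem_sdiff] at hg
      obtain ⟨hgF, hgnf⟩ := hg
      have : ¬ ∀ w ∈ g, ¬(w = x ∨ G.Adj x w) := by
        intro h
        exact hgnf (by rw [hEfar, mem_filter]; exact ⟨hgF, h⟩)
      push_neg at this
      obtain ⟨w, hw, hwx⟩ := this
      rcases hwx with rfl | hwx
      · refine mem_biUnion.mpr ⟨oth w g, ?_, ?_⟩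
        · rw [mem_neighborFinset]; exact hothadj w g hgF hw
        · rw [hATmem]
          refine ⟨hgF, ?_⟩
          simp only [hoth, dif_pos hw]
          exact Sym2.other_mem' hw
      · refine mem_biUnion.mpr ⟨w, ?_, ?_⟩
        · rw [mem_neighborFinset]; exact hwx
        · rw [hATmem]; exact ⟨hgF, hw⟩
    calc (F \ Efar).card ≤ ((G.neighborFinset x).biUnion AT).card := Finset.card_le_card hsub
      _ ≤ ∑ w ∈ (G.neighborFinset x), (AT w).card := Finset.card_biUnion_le
  -- main counting bound
  have hYsub : Yx ⊆ G.neighborFinset x := filter_subset _ _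
  have hmain : F.card ≤ ∑ w ∈ G.neighborFinset x, G.degree w := by
    have h0 : (F \ Efar).card + Efar.card = F.card :=
      Finset.card_sdiff_add_card_eq_card (filter_subset _ _)
    have h1 : ∑ w ∈ (G.neighborFinset x) \ Yx, (AT w).card + ∑ y ∈ Yx, (AT y).card
        = ∑ w ∈ G.neighborFinset x, (AT w).card := Finset.sum_sdiff hYsub
    have h2 : ∑ y ∈ Yx, ((AT y).card + (Zatt.filter (fun z => s(y, z) ∉ F)).card)
        ≤ ∑ y ∈ Yx, G.degree y := Finset.sum_le_sum hBy
    have h3 : ∑ w ∈ (G.neighborFinset x) \ Yx, (AT w).card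
        ≤ ∑ w ∈ (G.neighborFinset x) \ Yx, G.degree w :=
      Finset.sum_le_sum (fun w _ => hATcard w)
    have h4 : ∑ w ∈ (G.neighborFinset x) \ Yx, G.degree w + ∑ y ∈ Yx, G.degree y
        = ∑ w ∈ G.neighborFinset x, G.degree w := Finset.sum_sdiff hYsub
    have h5 := hfarsum
    have h6 : ∑ y ∈ Yx, ((AT y).card + (Zatt.filter (fun z => s(y, z) ∉ F)).card)
        = ∑ y ∈ Yx, (AT y).card + ∑ y ∈ Yx, (Zatt.filter (fun z => s(y, z) ∉ F)).card :=
      Finset.sum_add_distrib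
    omega
  -- Ore degree arithmetic
  have hσedge : ∀ w ∈ G.neighborFinset x, G.degree x + G.degree w ≤ σ := by
    intro w hw
    have hmem : s(x, w) ∈ G.edgeFinset := by
      rw [mem_neighborFinset] at hw
      rw [mem_edgeFinset, SimpleGraph.mem_edgeSet]
      exact hw
    have h := Finset.le_sup
      (f := fun e => Sym2.lift ⟨fun a b => G.degree a + G.degree b, fun _ _ => Nat.add_comm _ _⟩ e)
      hmem
    simp only [Sym2.lift_mk] at h
    exact h
  set d := G.degree x with hd
  have h7 : ∑ w ∈ G.neighborFinset x, G.degree w + d * d ≤ d * σ := by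
    calc ∑ w ∈ G.neighborFinset x, G.degree w + d * d
        = ∑ w ∈ G.neighborFinset x, (G.degree w + d) := by
          rw [Finset.sum_add_distrib, Finset.sum_const, smul_eq_mul,
            card_neighborFinset_eq_degree]
      _ ≤ ∑ _w ∈ G.neighborFinset x, σ := by
          apply Finset.sum_le_sum
          intro w hw
          rw [add_comm]
          exact hσedge w hw
      _ = d * σ := by
          rw [Finset.sum_const, smul_eq_mul, card_neighborFinset_eq_degree]
  have h8 : 4 * (d * σ) ≤ σ ^ 2 + 4 * (d * d) := by
    zify
    nlinarith [sq_nonneg ((σ : ℤ) - 2 * d)]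
  have h9 : 4 * F.card ≤ 4 * ∑ w ∈ G.neighborFinset x, G.degree w :=
    Nat.mul_le_mul_left 4 hmain
  omega

/-- Theorem 2.1: if `G` is `C₅`-free, then `ω₂'(G) ≤ σ(G)² / 4`,
where `σ(G)` is the Ore-degree of `G`. -/
theorem strongCliqueNumber_le_oreDegree_sq {V : Type*} [Fintype V] [DecidableEq V]
    (G : SimpleGraph V) [DecidableRel G.Adj]
    (hfree : ¬ G.ContainsSub (cycleGraph 5)) :
    4 * G.strongCliqueNumber ≤ G.oreDegree ^ 2 := by
  classical
  set S : Set ℕ := {n | ∃ F : Finset (Sym2 V), G.IsStrongClique F ∧ F.card = n} with hS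
  have hne : S.Nonempty := by
    refine ⟨0, ∅, ⟨?_, ?_⟩, rfl⟩
    · simp
    · simp
  have hbdd : BddAbove S := by
    refine ⟨G.edgeFinset.card, ?_⟩
    rintro n ⟨F, hF, rfl⟩
    apply Finset.card_le_card
    intro e he
    rw [SimpleGraph.mem_edgeFinset]
    exact hF.1 (Finset.mem_coe.mpr he)
  obtain ⟨F, hF, hcard⟩ := Nat.sSup_mem hne hbdd
  rw [SimpleGraph.strongCliqueNumber, ← hS, ← hcard]
  exact strong_clique_card_bound G hfree F hF
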